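/- Every n×n tridiagonal doubly stochastic matrix A satisfying b_{i-1} + b_i ≤ 1/2 for all i = 1,…,n (where b_i = A(i,i+1) and b_0 = b_n = 0) is completely positive. -/
import Mathlib


open Matrix

/-- An `n × n` real matrix is doubly stochastic if it is entrywise non-negative
and every row sum and column sum equals 1. -/
def IsDoublyStochastic {n : ℕ} (A : Matrix (Fin n) (Fin n) ℝ) : Prop :=
  (∀ i j, 0 ≤ A i j) ∧ (∀ i, ∑ j, A i j = 1) ∧ (∀ j, ∑ i, A i j = 1)

/-- A matrix is tridiagonal if `A i j = 0` whenever `|i - j| ≥ 2`. -/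
def IsTridiagonal {n : ℕ} (A : Matrix (Fin n) (Fin n) ℝ) : Prop :=
  ∀ i j : Fin n, 2 ≤ |(i : ℤ) - (j : ℤ)| → A i j = 0

/-- The superdiagonal entries `b_k = A (k, k+1)` in the 1-based indexing of the paper
(so `bEnt A k = A ⟨k-1⟩ ⟨k⟩` in 0-based indexing for `1 ≤ k ≤ n-1`), with the
convention `b_0 = b_n = 0`. -/
def bEnt {n : ℕ} (A : Matrix (Fin n) (Fin n) ℝ) (k : ℕ) : ℝ :=
  if h : 1 ≤ k ∧ k < n then A ⟨k - 1, by omega⟩ ⟨k, h.2⟩ else 0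

namespace CPAux

variable {n : ℕ}

/-- ℕ-indexed entries, zero outside range. -/
def aEnt (A : Matrix (Fin n) (Fin n) ℝ) (i j : ℕ) : ℝ :=
  if h : i < n ∧ j < n then A ⟨i, h.1⟩ ⟨j, h.2⟩ else 0

/-- The left-neighbour (subdiagonal) entry written with the symmetric (superdiagonal) data. -/
def blEnt (A : Matrix (Fin n) (Fin n) ℝ) (m : ℕ) : ℝ :=
  if 1 ≤ m then aEnt A (m - 1) m else 0

/-- The diagonal surplus. -/
def cEnt (A : Matrix (Fin n) (Fin n) ℝ) (m : ℕ) : ℝ :=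
  1 - 2 * (blEnt A m + aEnt A m (m + 1))

lemma aEnt_eq (A : Matrix (Fin n) (Fin n) ℝ) (i j : Fin n) :
    aEnt A (i : ℕ) (j : ℕ) = A i j := by
  unfold aEnt
  rw [dif_pos ⟨i.isLt, j.isLt⟩]

lemma aEnt_nonneg (A : Matrix (Fin n) (Fin n) ℝ) (hDS : IsDoublyStochastic A) (i j : ℕ) :
    0 ≤ aEnt A i j := by
  unfold aEnt
  split
  · exact hDS.1 _ _
  · exact le_rfl

lemma aEnt_out (A : Matrix (Fin n) (Fin n) ℝ) {i j : ℕ} (h : n ≤ i ∨ n ≤ j) :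
    aEnt A i j = 0 := by
  unfold aEnt
  rw [dif_neg]
  omega

lemma aEnt_zero (A : Matrix (Fin n) (Fin n) ℝ) (htri : IsTridiagonal A) {i j : ℕ}
    (h : i + 2 ≤ j ∨ j + 2 ≤ i) : aEnt A i j = 0 := by
  unfold aEnt
  split
  · apply htri
    rw [le_abs]
    simp only [Fin.val_mk]
    omega
  · rfl

lemma row_sum (A : Matrix (Fin n) (Fin n) ℝ) (hDS : IsDoublyStochastic A) {i : ℕ}
    (hi : i < n) : ∑ j ∈ Finset.range n, aEnt A i j = 1 := by
  have h := hDS.2.1 ⟨i, hi⟩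
  rw [← h, ← Fin.sum_univ_eq_sum_range (fun j => aEnt A i j) n]
  apply Finset.sum_congr rfl
  intro j _
  unfold aEnt
  rw [dif_pos ⟨hi, j.isLt⟩]

lemma col_sum (A : Matrix (Fin n) (Fin n) ℝ) (hDS : IsDoublyStochastic A) {j : ℕ}
    (hj : j < n) : ∑ i ∈ Finset.range n, aEnt A i j = 1 := by
  have h := hDS.2.2 ⟨j, hj⟩
  rw [← h, ← Fin.sum_univ_eq_sum_range (fun i => aEnt A i j) n]
  apply Finset.sum_congr rfl
  intro i _
  unfold aEnt
  rw [dif_pos ⟨i.isLt, hj⟩]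

lemma row_extract (A : Matrix (Fin n) (Fin n) ℝ) (hDS : IsDoublyStochastic A)
    (htri : IsTridiagonal A) {i : ℕ} (hi : i < n) :
    (if 1 ≤ i then aEnt A i (i - 1) else 0) + aEnt A i i + aEnt A i (i + 1) = 1 := by
  rw [← row_sum A hDS hi]
  have key : ∀ j ∈ Finset.range n, aEnt A i j =
      (if 1 ≤ i ∧ j = i - 1 then aEnt A i (i - 1) else 0) +
      (if j = i then aEnt A i i else 0) +
      (if j = i + 1 then aEnt A i (i + 1) else 0) := by
    intro j hj
    rcases (by omega : j + 2 ≤ i ∨ (1 ≤ i ∧ j = i - 1) ∨ j = i ∨ j = i + 1 ∨ i + 2 ≤ j) with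
      h | ⟨h1, h2⟩ | h | h | h
    · rw [aEnt_zero A htri (Or.inr h), if_neg (by omega), if_neg (by omega), if_neg (by omega)]
      ring
    · subst h2
      rw [if_pos ⟨h1, rfl⟩, if_neg (by omega), if_neg (by omega)]
      ring
    · subst h
      rw [if_neg (by omega), if_pos rfl, if_neg (by omega)]
      ring
    · subst h
      rw [if_neg (by omega), if_neg (by omega), if_pos rfl]
      ring
    · rw [aEnt_zero A htri (Or.inl h), if_neg (by omega), if_neg (by omega), if_neg (by omega)]
      ring
  rw [Finset.sum_congr rfl key, Finset.sum_add_distrib, Finset.sum_add_distrib]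
  congr 1
  congr 1
  · by_cases h1 : 1 ≤ i
    · rw [if_pos h1]
      simp only [h1, true_and]
      rw [Finset.sum_ite_eq' (Finset.range n) (i - 1) (fun _ => aEnt A i (i - 1)),
        if_pos (Finset.mem_range.mpr (by omega))]
    · rw [if_neg h1, Finset.sum_eq_zero]
      intro j _
      rw [if_neg (fun hc => h1 hc.1)]
  · rw [Finset.sum_ite_eq' (Finset.range n) i (fun _ => aEnt A i i),
      if_pos (Finset.mem_range.mpr hi)]
  · rw [Finset.sum_ite_eq' (Finset.range n) (i + 1) (fun _ => aEnt A i (i + 1))]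
    by_cases h : i + 1 < n
    · rw [if_pos (Finset.mem_range.mpr h)]
    · rw [if_neg (fun hc => h (Finset.mem_range.mp hc)), aEnt_out A (Or.inr (by omega))]

lemma col_extract (A : Matrix (Fin n) (Fin n) ℝ) (hDS : IsDoublyStochastic A)
    (htri : IsTridiagonal A) {j : ℕ} (hj : j < n) :
    (if 1 ≤ j then aEnt A (j - 1) j else 0) + aEnt A j j + aEnt A (j + 1) j = 1 := by
  rw [← col_sum A hDS hj]
  have key : ∀ i ∈ Finset.range n, aEnt A i j =
      (if 1 ≤ j ∧ i = j - 1 then aEnt A (j - 1) j else 0) +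
      (if i = j then aEnt A j j else 0) +
      (if i = j + 1 then aEnt A (j + 1) j else 0) := by
    intro i hi
    rcases (by omega : i + 2 ≤ j ∨ (1 ≤ j ∧ i = j - 1) ∨ i = j ∨ i = j + 1 ∨ j + 2 ≤ i) with
      h | ⟨h1, h2⟩ | h | h | h
    · rw [aEnt_zero A htri (Or.inl h), if_neg (by omega), if_neg (by omega), if_neg (by omega)]
      ring
    · subst h2
      rw [if_pos ⟨h1, rfl⟩, if_neg (by omega), if_neg (by omega)]
      ring
    · subst h
      rw [if_neg (by omega), if_pos rfl, if_neg (by omega)]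
      ring
    · subst h
      rw [if_neg (by omega), if_neg (by omega), if_pos rfl]
      ring
    · rw [aEnt_zero A htri (Or.inr h), if_neg (by omega), if_neg (by omega), if_neg (by omega)]
      ring
  rw [Finset.sum_congr rfl key, Finset.sum_add_distrib, Finset.sum_add_distrib]
  congr 1
  congr 1
  · by_cases h1 : 1 ≤ j
    · rw [if_pos h1]
      simp only [h1, true_and]
      rw [Finset.sum_ite_eq' (Finset.range n) (j - 1) (fun _ => aEnt A (j - 1) j),
        if_pos (Finset.mem_range.mpr (by omega))]
    · rw [if_neg h1, Finset.sum_eq_zero]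
      intro i _
      rw [if_neg (fun hc => h1 hc.1)]
  · rw [Finset.sum_ite_eq' (Finset.range n) j (fun _ => aEnt A j j),
      if_pos (Finset.mem_range.mpr hj)]
  · rw [Finset.sum_ite_eq' (Finset.range n) (j + 1) (fun _ => aEnt A (j + 1) j)]
    by_cases h : j + 1 < n
    · rw [if_pos (Finset.mem_range.mpr h)]
    · rw [if_neg (fun hc => h (Finset.mem_range.mp hc)), aEnt_out A (Or.inl (by omega))]

lemma symm_ent (A : Matrix (Fin n) (Fin n) ℝ) (hDS : IsDoublyStochastic A)
    (htri : IsTridiagonal A) : ∀ k, aEnt A (k + 1) k = aEnt A k (k + 1) := by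
  intro k
  induction k with
  | zero =>
    by_cases h : 0 < n
    · have hr := row_extract A hDS htri h
      have hc := col_extract A hDS htri h
      rw [if_neg (by omega)] at hr hc
      linarith
    · rw [aEnt_out A (Or.inr (by omega)), aEnt_out A (Or.inl (by omega))]
  | succ k ih =>
    by_cases h : k + 1 < n
    · have hr := row_extract A hDS htri h
      have hc := col_extract A hDS htri h
      rw [if_pos (by omega : 1 ≤ k + 1)] at hr hc
      simp only [Nat.add_sub_cancel] at hr hc
      linarith
    · rw [aEnt_out A (Or.inr (by omega)), aEnt_out A (Or.inl (by omega))]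

/-- The subdiagonal entry equals `blEnt`. -/
lemma sub_eq_bl (A : Matrix (Fin n) (Fin n) ℝ) (hDS : IsDoublyStochastic A)
    (htri : IsTridiagonal A) (m : ℕ) :
    (if 1 ≤ m then aEnt A m (m - 1) else 0) = blEnt A m := by
  unfold blEnt
  by_cases h1 : 1 ≤ m
  · rw [if_pos h1, if_pos h1]
    have hs := symm_ent A hDS htri (m - 1)
    rw [Nat.sub_add_cancel h1] at hs
    exact hs
  · rw [if_neg h1, if_neg h1]

lemma row_id (A : Matrix (Fin n) (Fin n) ℝ) (hDS : IsDoublyStochastic A)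
    (htri : IsTridiagonal A) {m : ℕ} (hm : m < n) :
    blEnt A m + aEnt A m m + aEnt A m (m + 1) = 1 := by
  rw [← sub_eq_bl A hDS htri m]
  exact row_extract A hDS htri hm

lemma diag_id (A : Matrix (Fin n) (Fin n) ℝ) (hDS : IsDoublyStochastic A)
    (htri : IsTridiagonal A) {m : ℕ} (hm : m < n) :
    aEnt A m m = blEnt A m + aEnt A m (m + 1) + cEnt A m := by
  have h := row_id A hDS htri hm
  unfold cEnt
  linarith

lemma bEnt_eq (A : Matrix (Fin n) (Fin n) ℝ) (k : ℕ) :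
    bEnt A k = if 1 ≤ k then aEnt A (k - 1) k else 0 := by
  unfold bEnt
  by_cases h : 1 ≤ k ∧ k < n
  · rw [dif_pos h, if_pos h.1]
    unfold aEnt
    rw [dif_pos ⟨by omega, h.2⟩]
  · rw [dif_neg h]
    by_cases h1 : 1 ≤ k
    · rw [if_pos h1, aEnt_out A (Or.inr (by omega))]
    · rw [if_neg h1]

lemma c_nonneg (A : Matrix (Fin n) (Fin n) ℝ)
    (hdom : ∀ i : Fin n, bEnt A (i : ℕ) + bEnt A ((i : ℕ) + 1) ≤ 1 / 2)
    {m : ℕ} (hm : m < n) : 0 ≤ cEnt A m := by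
  have h : bEnt A m + bEnt A (m + 1) ≤ 1 / 2 := hdom ⟨m, hm⟩
  rw [bEnt_eq, bEnt_eq, if_pos (Nat.le_add_left 1 m), Nat.add_sub_cancel] at h
  unfold cEnt blEnt
  linarith

/-- The nonnegative factor, ℕ-indexed. -/
noncomputable def WEnt (A : Matrix (Fin n) (Fin n) ℝ) (i j : ℕ) : ℝ :=
  if j < n then (if i = j ∨ i = j + 1 then Real.sqrt (aEnt A j (j + 1)) else 0)
  else (if i + n = j then Real.sqrt (cEnt A i) else 0)

end CPAux

open CPAux in
/-- Every tridiagonal doubly stochastic matrix satisfying `b_{i-1} + b_i ≤ 1/2` for all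
`i = 1, …, n` is completely positive. -/
theorem tridiagonal_doublyStochastic_diagDom_completelyPositive {n : ℕ}
    (A : Matrix (Fin n) (Fin n) ℝ) (hDS : IsDoublyStochastic A) (htri : IsTridiagonal A)
    (hdom : ∀ i : Fin n, bEnt A (i : ℕ) + bEnt A ((i : ℕ) + 1) ≤ 1 / 2) :
    ∃ (k : ℕ) (V : Matrix (Fin n) (Fin k) ℝ), (∀ i j, 0 ≤ V i j) ∧ A = V * Vᵀ := by
  classical
  have hsym := symm_ent A hDS htri
  have ha0 := aEnt_nonneg A hDS
  refine ⟨n + n, Matrix.of (fun i j => WEnt A (i : ℕ) (j : ℕ)), ?_, ?_⟩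
  · intro i j
    simp only [Matrix.of_apply]
    unfold WEnt
    split_ifs <;> first | exact Real.sqrt_nonneg _ | exact le_rfl
  · ext i l
    rw [Matrix.mul_apply]
    simp only [Matrix.transpose_apply, Matrix.of_apply]
    rw [Fin.sum_univ_add]
    simp only [Fin.coe_castAdd, Fin.coe_natAdd]
    rw [Fin.sum_univ_eq_sum_range (fun j => WEnt A (i : ℕ) j * WEnt A (l : ℕ) j) n,
      Fin.sum_univ_eq_sum_range (fun j => WEnt A (i : ℕ) (n + j) * WEnt A (l : ℕ) (n + j)) n]
    -- second (diagonal) sum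
    have hS2 : ∀ j ∈ Finset.range n, WEnt A (i : ℕ) (n + j) * WEnt A (l : ℕ) (n + j) =
        if j = (i : ℕ) then (if (l : ℕ) = (i : ℕ) then cEnt A (i : ℕ) else 0) else 0 := by
      intro j hj
      unfold WEnt
      rw [if_neg (by omega : ¬ n + j < n), if_neg (by omega : ¬ n + j < n)]
      by_cases hji : j = (i : ℕ)
      · subst hji
        rw [if_pos (by omega : (i : ℕ) + n = n + (i : ℕ)), if_pos rfl]
        by_cases hli : (l : ℕ) = (i : ℕ)
        · rw [if_pos (by omega : (l : ℕ) + n = n + (i : ℕ)), if_pos hli, hli,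
            Real.mul_self_sqrt (c_nonneg A hdom i.isLt)]
        · rw [if_neg (by omega : ¬ (l : ℕ) + n = n + (i : ℕ)), mul_zero, if_neg hli]
      · rw [if_neg (by omega : ¬ (i : ℕ) + n = n + j), if_neg hji, zero_mul]
    -- first (edge) sum, generic form
    have hS1 : ∀ j ∈ Finset.range n, WEnt A (i : ℕ) j * WEnt A (l : ℕ) j =
        if ((i : ℕ) = j ∨ (i : ℕ) = j + 1) ∧ ((l : ℕ) = j ∨ (l : ℕ) = j + 1)
          then aEnt A j (j + 1) else 0 := by
      intro j hj
      unfold WEnt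
      rw [if_pos (Finset.mem_range.mp hj), if_pos (Finset.mem_range.mp hj)]
      by_cases h1 : (i : ℕ) = j ∨ (i : ℕ) = j + 1
      · by_cases h2 : (l : ℕ) = j ∨ (l : ℕ) = j + 1
        · rw [if_pos h1, if_pos h2, if_pos ⟨h1, h2⟩, Real.mul_self_sqrt (ha0 _ _)]
        · rw [if_neg h2, mul_zero, if_neg (by exact fun hc => h2 hc.2)]
      · rw [if_neg h1, zero_mul, if_neg (by exact fun hc => h1 hc.1)]
    rw [Finset.sum_congr rfl hS1, Finset.sum_congr rfl hS2,
      Finset.sum_ite_eq' (Finset.range n) (i : ℕ)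
        (fun _ => if (l : ℕ) = (i : ℕ) then cEnt A (i : ℕ) else 0),
      if_pos (Finset.mem_range.mpr i.isLt)]
    rcases (by omega : (i : ℕ) = (l : ℕ) ∨ (l : ℕ) = (i : ℕ) + 1 ∨ (i : ℕ) = (l : ℕ) + 1 ∨
        ((i : ℕ) + 2 ≤ (l : ℕ) ∨ (l : ℕ) + 2 ≤ (i : ℕ))) with hil | hil | hil | hil
    · -- diagonal case
      have hle : l = i := Fin.ext hil.symm
      subst hle
      rw [if_pos rfl]
      have key : ∀ j ∈ Finset.range n,
          (if ((l : ℕ) = j ∨ (l : ℕ) = j + 1) ∧ ((l : ℕ) = j ∨ (l : ℕ) = j + 1)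
            then aEnt A j (j + 1) else 0) =
          (if 1 ≤ (l : ℕ) ∧ j = (l : ℕ) - 1 then aEnt A ((l : ℕ) - 1) (l : ℕ) else 0) +
          (if j = (l : ℕ) then aEnt A (l : ℕ) ((l : ℕ) + 1) else 0) := by
        intro j hj
        rcases (by omega : (1 ≤ (l : ℕ) ∧ j = (l : ℕ) - 1) ∨ j = (l : ℕ) ∨
            ¬ ((l : ℕ) = j ∨ (l : ℕ) = j + 1)) with ⟨h1, h2⟩ | h | h
        · subst h2
          rw [if_pos ⟨Or.inr (by omega), Or.inr (by omega)⟩, if_pos ⟨h1, rfl⟩,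
            if_neg (by omega), Nat.sub_add_cancel h1]
          ring
        · subst h
          rw [if_pos ⟨Or.inl rfl, Or.inl rfl⟩, if_neg (by omega), if_pos rfl]
          ring
        · rw [if_neg (by exact fun hc => h hc.1), if_neg (by omega), if_neg (by omega)]
          ring
      rw [Finset.sum_congr rfl key, Finset.sum_add_distrib,
        Finset.sum_ite_eq' (Finset.range n) (l : ℕ)
          (fun _ => aEnt A (l : ℕ) ((l : ℕ) + 1)),
        if_pos (Finset.mem_range.mpr l.isLt)]
      have hblsum : (∑ j ∈ Finset.range n,
          if 1 ≤ (l : ℕ) ∧ j = (l : ℕ) - 1 then aEnt A ((l : ℕ) - 1) (l : ℕ) else 0)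
          = blEnt A (l : ℕ) := by
        unfold blEnt
        by_cases h1 : 1 ≤ (l : ℕ)
        · rw [if_pos h1]
          simp only [h1, true_and]
          rw [Finset.sum_ite_eq' (Finset.range n) ((l : ℕ) - 1)
            (fun _ => aEnt A ((l : ℕ) - 1) (l : ℕ)), if_pos (Finset.mem_range.mpr (by omega))]
        · rw [if_neg h1, Finset.sum_eq_zero (fun j _ => if_neg (fun hc => h1 hc.1))]
      rw [hblsum, ← aEnt_eq A l l]
      have := diag_id A hDS htri l.isLt
      linarith
    · -- l = i + 1
      rw [if_neg (by omega)]
      have key : ∀ j ∈ Finset.range n,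
          (if ((i : ℕ) = j ∨ (i : ℕ) = j + 1) ∧ ((l : ℕ) = j ∨ (l : ℕ) = j + 1)
            then aEnt A j (j + 1) else 0) =
          (if j = (i : ℕ) then aEnt A (i : ℕ) ((i : ℕ) + 1) else 0) := by
        intro j hj
        by_cases h : j = (i : ℕ)
        · subst h
          rw [if_pos ⟨Or.inl rfl, Or.inr (by omega)⟩, if_pos rfl]
        · rw [if_neg (by omega), if_neg h]
      rw [Finset.sum_congr rfl key,
        Finset.sum_ite_eq' (Finset.range n) (i : ℕ) (fun _ => aEnt A (i : ℕ) ((i : ℕ) + 1)),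
        if_pos (Finset.mem_range.mpr i.isLt), ← aEnt_eq A i l, hil]
      ring
    · -- i = l + 1
      rw [if_neg (by omega)]
      have key : ∀ j ∈ Finset.range n,
          (if ((i : ℕ) = j ∨ (i : ℕ) = j + 1) ∧ ((l : ℕ) = j ∨ (l : ℕ) = j + 1)
            then aEnt A j (j + 1) else 0) =
          (if j = (l : ℕ) then aEnt A (l : ℕ) ((l : ℕ) + 1) else 0) := by
        intro j hj
        by_cases h : j = (l : ℕ)
        · subst h
          rw [if_pos ⟨Or.inr (by omega), Or.inl rfl⟩, if_pos rfl]
        · rw [if_neg (by omega), if_neg h]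
      rw [Finset.sum_congr rfl key,
        Finset.sum_ite_eq' (Finset.range n) (l : ℕ) (fun _ => aEnt A (l : ℕ) ((l : ℕ) + 1)),
        if_pos (Finset.mem_range.mpr l.isLt), ← aEnt_eq A i l, hil, hsym (l : ℕ)]
      ring
    · -- far apart
      rw [if_neg (by omega)]
      have key : ∀ j ∈ Finset.range n,
          (if ((i : ℕ) = j ∨ (i : ℕ) = j + 1) ∧ ((l : ℕ) = j ∨ (l : ℕ) = j + 1)
            then aEnt A j (j + 1) else 0) = 0 := by
        intro j hj
        rw [if_neg (by omega)]
      rw [Finset.sum_congr rfl key, Finset.sum_const_zero,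
        htri i l (by rw [le_abs]; omega)]
      ring
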